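/- Let G = (V, D, B) be an HTC-identifiable directed mixed graph with certificate sets {S_v : v ∈ V} having no subset cycles, and suppose i, j ∈ V are such that i ↔ j ∉ B, i ∉ S_j, and j ∉ S_i. Then the graph G' obtained by adding the bidirected edge i ↔ j is HTC-identifiable with the same sets {S_v}. -/

import Mathlib

variable {V : Type*} [Fintype V] [DecidableEq V]

/-- A half-trek from `v` to `j` (as a proposition): either a directed path of
length ≥ 1 from `v` to `j`, or a bidirected edge `v ↔ w` followed by a
directed path (possibly of length 0) from `w` to `j`. -/
def IsHalfTrek (D B : V → V → Prop) (v j : V) : Prop :=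
  Relation.TransGen D v j ∨ ∃ w, B v w ∧ Relation.ReflTransGen D w j

/-- The parents of `v` in the directed part `D`. -/
def pa (D : V → V → Prop) [DecidableRel D] (v : V) : Finset V :=
  Finset.univ.filter (fun w => D w v)

/-- The siblings of `v` in the bidirected part `B`. -/
def sib (B : V → V → Prop) [DecidableRel B] (v : V) : Finset V :=
  Finset.univ.filter (fun w => B v w)

/-- A half-trek from `y` to `b` recorded with its right-hand directed part:
it either starts with a bidirected edge `y ↔ first`, or is purely directed
(`y = first`) with at least one directed edge; `first :: tail` is a directed
walk ending at `b`. The left side of the half-trek is just `{y}`. -/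
structure HalfTrekPath (D B : V → V → Prop) (y b : V) where
  first : V
  tail : List V
  start : B y first ∨ (y = first ∧ tail ≠ [])
  chain : List.Chain D first tail
  ends : (first :: tail).getLast (List.cons_ne_nil _ _) = b

/-- The right-hand vertex set of a half-trek. -/
def HalfTrekPath.right {D B : V → V → Prop} {y b : V}
    (t : HalfTrekPath D B y b) : Finset V :=
  (t.first :: t.tail).toFinset

/-- `Y` satisfies the half-trek criterion with respect to `v`:
`|Y| = |pa(v)|`, `Y ∩ ({v} ∪ sib(v)) = ∅`, and there is a system of
half-treks from `Y` onto `pa(v)` with no sided intersection (distinct sources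
and pairwise disjoint right-hand sides). -/
def SatisfiesHTC (D B : V → V → Prop) [DecidableRel D]
    (Y : Finset V) (v : V) : Prop :=
  Y.card = (pa D v).card ∧
  (∀ y ∈ Y, y ≠ v ∧ ¬ B v y) ∧
  ∃ f : V → V, Set.BijOn f (Y : Set V) ((pa D v : Finset V) : Set V) ∧
    ∃ t : ∀ y ∈ Y, HalfTrekPath D B y (f y),
      ∀ y (hy : y ∈ Y) z (hz : z ∈ Y), y ≠ z →
        Disjoint (t y hy).right (t z hz).right

/-- `G` is HTC-identifiable with certificate sets `S`: each `S v` satisfies the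
half-trek criterion w.r.t. `v`, and there is a total order `≺` on `V` with
`w ≺ v` whenever `w ∈ S v` is half-trek reachable from `v`. -/
def HTCIdentifiableWith (D B : V → V → Prop) [DecidableRel D]
    (S : V → Finset V) : Prop :=
  (∀ v, SatisfiesHTC D B (S v) v) ∧
  ∃ lt : V → V → Prop, IsStrictTotalOrder V lt ∧
    ∀ v w, w ∈ S v → IsHalfTrek D B v w → lt w v

/-- The sets `S` have no subset cycles: no sequence
`v₁ ∈ S v₂, v₂ ∈ S v₃, …, vₙ ∈ S v₁`. -/
def NoSubsetCycles (S : V → Finset V) : Prop :=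
  ∀ v, ¬ Relation.TransGen (fun a b => a ∈ S b) v v

/-- Adding a bidirected edge `i ↔ j` with `i ↔ j ∉ B`, `i ∉ S j`, `j ∉ S i`
to an HTC-identifiable graph with no subset cycles yields an
HTC-identifiable graph with the same certificate sets. -/
theorem stmt_11 (D B : V → V → Prop) [DecidableRel D]
    (hBsymm : Symmetric B) (S : V → Finset V)
    (hHTC : HTCIdentifiableWith D B S) (hnc : NoSubsetCycles S)
    (i j : V) (hij : i ≠ j) (hB : ¬ B i j)
    (hiS : i ∉ S j) (hjS : j ∉ S i) :
    HTCIdentifiableWith D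
      (fun a b => B a b ∨ (a = i ∧ b = j) ∨ (a = j ∧ b = i)) S := by
  classical
  set B' : V → V → Prop := fun a b => B a b ∨ (a = i ∧ b = j) ∨ (a = j ∧ b = i)
    with hB'
  constructor
  · intro v
    obtain ⟨h1, h2, f, hbij, t, hdisj⟩ := hHTC.1 v
    refine ⟨h1, ?_, f, hbij,
      fun y hy => ⟨(t y hy).first, (t y hy).tail, (t y hy).start.imp Or.inl id,
        (t y hy).chain, (t y hy).ends⟩,
      fun y hy z hz hne => hdisj y hy z hz hne⟩
    intro y hy
    refine ⟨(h2 y hy).1, ?_⟩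
    rintro (h | ⟨rfl, rfl⟩ | ⟨rfl, rfl⟩)
    · exact (h2 y hy).2 h
    · exact hjS hy
    · exact hiS hy
  · set R : V → V → Prop := fun w v => w ∈ S v ∧ IsHalfTrek D B' v w with hR
    have hirr : ∀ a, ¬ Relation.TransGen R a a := by
      intro a h
      exact hnc a (Relation.TransGen.mono (r := R) (fun x y hxy => hxy.1) a a h)
    haveI : IsPartialOrder V (Relation.ReflTransGen R) :=
      { refl := fun a => Relation.ReflTransGen.refl
        trans := fun a b c hab hbc => hab.trans hbc
        antisymm := by
          intro a b hab hba
          rcases (Relation.reflTransGen_iff_eq_or_transGen.mp hab) with h | h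
          · exact h.symm
          · exact absurd (h.trans_left hba) (hirr a) }
    obtain ⟨s, hs, hsub⟩ := extend_partialOrder (Relation.ReflTransGen R)
    haveI := hs
    refine ⟨fun a b => s a b ∧ a ≠ b,
      { trichotomous := ?_,
        irrefl := fun a h => h.2 rfl,
        trans := ?_ }, ?_⟩
    · intro a b
      by_cases h : a = b
      · exact fun _ _ => h
      · rcases total_of s a b with hab | hba
        · exact fun hn _ => (hn ⟨hab, h⟩).elim
        · exact fun _ hn => (hn ⟨hba, Ne.symm h⟩).elim
    · rintro a b c ⟨hab, hne⟩ ⟨hbc, hne'⟩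
      refine ⟨_root_.trans hab hbc, ?_⟩
      rintro rfl
      exact hne (antisymm hab hbc)
    · intro v w hw ht
      have hRwv : R w v := ⟨hw, ht⟩
      refine ⟨hsub _ _ (Relation.ReflTransGen.single hRwv), ?_⟩
      rintro rfl
      exact hirr w (Relation.TransGen.single hRwv)
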